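/- If X : ℝ → Matrix (Fin 3) (Fin 3) ℝ solves X'(t) = B(t) * X(t) where B(t) is skew-symmetric for each t and continuous in t, and X(0) is orthogonal (X(0)ᵀ * X(0) = 1), then X(t)ᵀ * X(t) = 1 for all t. -/

import Mathlib

open Matrix

attribute [local instance] Matrix.normedAddCommGroup Matrix.normedSpace

theorem stmt_4 (B : ℝ → Matrix (Fin 3) (Fin 3) ℝ) (hBc : Continuous B)
    (hBskew : ∀ t, (B t)ᵀ = -(B t))
    (X : ℝ → Matrix (Fin 3) (Fin 3) ℝ)
    (hX : ∀ t : ℝ, HasDerivAt X (B t * X t) t)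
    (hX0 : (X 0)ᵀ * X 0 = 1) :
    ∀ t : ℝ, (X t)ᵀ * X t = 1 := by
  -- entry evaluation as a continuous linear map
  have hE : ∀ (i j : Fin 3) (t : ℝ),
      HasDerivAt (fun s => X s i j) ((B t * X t) i j) t := by
    intro i j t
    exact (LinearMap.toContinuousLinearMap
        (((LinearMap.proj j : (Fin 3 → ℝ) →ₗ[ℝ] ℝ).comp
          (LinearMap.proj i : (Matrix (Fin 3) (Fin 3) ℝ) →ₗ[ℝ]
            (Fin 3 → ℝ))))).hasFDerivAt.comp_hasDerivAt t (hX t)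
  have hzero : ∀ t, (B t * X t)ᵀ * X t + (X t)ᵀ * (B t * X t) = 0 := by
    intro t
    rw [Matrix.transpose_mul, hBskew t]
    simp [Matrix.mul_assoc]
  have hg : ∀ (i j : Fin 3) (t : ℝ),
      HasDerivAt (fun s => ∑ k, X s k i * X s k j) 0 t := by
    intro i j t
    have h0 : (0 : ℝ) = ∑ k, ((B t * X t) k i * X t k j + X t k i * (B t * X t) k j) := by
      have := congrArg (fun M => M i j) (hzero t)
      simpa [Matrix.add_apply, Matrix.mul_apply, Matrix.transpose_apply,
        Finset.sum_add_distrib, mul_comm] using this.symm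
    rw [h0]
    exact HasDerivAt.fun_sum fun k _ => (hE k i t).fun_mul (hE k j t)
  have hconst : ∀ (i j : Fin 3) (t : ℝ),
      (∑ k, X t k i * X t k j) = ∑ k, X 0 k i * X 0 k j := by
    intro i j t
    have hdiff : Differentiable ℝ (fun s => ∑ k, X s k i * X s k j) :=
      fun s => (hg i j s).differentiableAt
    have hderiv : ∀ s, deriv (fun s => ∑ k, X s k i * X s k j) s = 0 :=
      fun s => (hg i j s).deriv
    exact is_const_of_deriv_eq_zero hdiff hderiv t 0
  intro t
  ext i j
  have h1 : ((X t)ᵀ * X t) i j = ∑ k, X t k i * X t k j := by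
    simp [Matrix.mul_apply, Matrix.transpose_apply]
  have h2 : ((X 0)ᵀ * X 0) i j = ∑ k, X 0 k i * X 0 k j := by
    simp [Matrix.mul_apply, Matrix.transpose_apply]
  rw [h1, hconst i j t, ← h2, hX0]
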